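/- Let A = (Q, Σ, δ, s, F) be an input-consistent DFA in which the initial state s has no incoming transitions and every state is reachable from s, and let u ∈ Q with u ≠ s. Then inf I_u = μ · λ(u), where μ is the co-lex minimum of the finite nonempty set {inf I_v : v ∈ δ⁻¹(u)}; symmetrically, sup I_u = ν · λ(u), where ν is the co-lex maximum of {sup I_v : v ∈ δ⁻¹(u)}. Here γ · a denotes appending character a at the end of the (possibly infinite) string γ. -/

import Mathlib

/-- A (possibly left-infinite) string over alphabet `A`, indexed from the END:
`f i` is the `i`-th character from the right, and `⊥` means the position is
past the beginning of the string.  The elements of `Σ* ∪ Σ^ω` are the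
well-formed (`CStr.WF`) such functions. -/
abbrev CStr (A : Type*) := ℕ → WithBot A

/-- Well-formed: once we run out of characters going leftwards, it stays so. -/
def CStr.WF {A : Type*} (f : CStr A) : Prop := ∀ i, f i = ⊥ → f (i + 1) = ⊥

/-- The string is finite (an element of `Σ*`). -/
def CStr.Finite {A : Type*} (f : CStr A) : Prop := ∃ i, f i = ⊥

/-- Length of a finite string. -/
noncomputable def CStr.length {A : Type*} (f : CStr A) : ℕ := sInf {i | f i = ⊥}

/-- A finite string, given as a list read left-to-right, viewed as a `CStr`. -/
def CStr.ofList {A : Type*} (w : List A) : CStr A := fun i =>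
  if h : i < w.length then (w.get ⟨w.length - 1 - i, by omega⟩ : WithBot A) else ⊥

/-- The co-lexicographic (strict) order on `Σ* ∪ Σ^ω`: compare the last
characters first (position `0`), a missing character (`⊥`) being smaller
than every character of the alphabet. -/
def colexLt {A : Type*} [LinearOrder A] (f g : CStr A) : Prop :=
  ∃ i, (∀ j, j < i → f j = g j) ∧ f i < g i

/-- The non-strict co-lex order. -/
def colexLe {A : Type*} [LinearOrder A] (f g : CStr A) : Prop := colexLt f g ∨ f = g

/-- `g` is the greatest lower bound (infimum) of `S` in `(Σ* ∪ Σ^ω, ≤)`. -/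
def IsColexGLB {A : Type*} [LinearOrder A] (S : Set (CStr A)) (g : CStr A) : Prop :=
  g.WF ∧ (∀ f ∈ S, colexLe g f) ∧ ∀ h, CStr.WF h → (∀ f ∈ S, colexLe h f) → colexLe h g

/-- `g` is the least upper bound (supremum) of `S` in `(Σ* ∪ Σ^ω, ≤)`. -/
def IsColexLUB {A : Type*} [LinearOrder A] (S : Set (CStr A)) (g : CStr A) : Prop :=
  g.WF ∧ (∀ f ∈ S, colexLe f g) ∧ ∀ h, CStr.WF h → (∀ f ∈ S, colexLe f h) → colexLe g h

/-- A DFA `(Q, A, δ, start, accept)` with a partial transition function. -/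
structure PDFA (A Q : Type*) where
  δ : Q → A → Option Q
  start : Q
  accept : Set Q

/-- The transition function extended to finite strings (read left-to-right). -/
def PDFA.δStar {A Q : Type*} (M : PDFA A Q) : Q → List A → Option Q
  | q, [] => some q
  | q, a :: w => (M.δ q a).bind fun q' => M.δStar q' w

/-- `I_u`: the set of finite strings reaching `u` from the initial state. -/
def PDFA.I {A Q : Type*} (M : PDFA A Q) (u : Q) : Set (List A) :=
  {w | M.δStar M.start w = some u}

/-- The initial state has no incoming transitions. -/
def PDFA.NoIncomingStart {A Q : Type*} (M : PDFA A Q) : Prop :=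
  ∀ v a, M.δ v a ≠ some M.start

/-- Every state is reachable from the initial state. -/
def PDFA.Reachable {A Q : Type*} (M : PDFA A Q) : Prop :=
  ∀ u, ∃ w : List A, M.δStar M.start w = some u

/-- Input consistency: all transitions entering a state `u` carry the same
label `lam u`. -/
def PDFA.InputConsistent {A Q : Type*} (M : PDFA A Q) (lam : Q → A) : Prop :=
  ∀ v a u, M.δ v a = some u → lam u = a

/-- The maximum co-lex order `<_A` on the states of a DFA:
`u <_A v` iff `α < β` for every `α ∈ I_u` and every `β ∈ I_v`. -/
def PDFA.colexStateLt {A Q : Type*} [LinearOrder A] (M : PDFA A Q) (u v : Q) : Prop :=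
  ∀ α ∈ M.I u, ∀ β ∈ M.I v, colexLt (CStr.ofList α) (CStr.ofList β)

/-- `suf_k`: the length-`k` suffix of a string; positions `≥ k` are cut off.
(The `⊥` entries at positions `< k` play the role of the left-padding symbol
`#`, which is smaller than every character of the alphabet.) -/
def CStr.suf {A : Type*} (k : ℕ) (f : CStr A) : CStr A := fun i => if i < k then f i else ⊥

/-- `β^ω · α` : the left-infinite string obtained by concatenating infinitely
many copies of `β`, followed (at the right end) by `α`. -/
def CStr.omegaAppend {A : Type*} (b a : List A) : CStr A := fun i =>
  if i < a.length then CStr.ofList a i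
  else CStr.ofList b ((i - a.length) % b.length)

/-- Appending one character at the (right) end of a possibly infinite string. -/
def CStr.snoc {A : Type*} (f : CStr A) (a : A) : CStr A := fun i =>
  match i with
  | 0 => (a : WithBot A)
  | Nat.succ j => f j

/-- Removing the last `k` characters of a string. -/
def CStr.drop {A : Type*} (f : CStr A) (k : ℕ) : CStr A := fun i => f (i + k)

/-- `suf_m(x)` is a prefix of `suf_{2m}(y)`. -/
def ExtPrefix {A : Type*} (x y : CStr A) (m : ℕ) : Prop := ∀ j, j < m → x j = y (m + j)

/-- The set of extenders of `u` at distance `m` (used with `m = 2^k`), where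
`g u` denotes the infimum string `inf I_u`:
`P(u) = {v ∈ Q : δ(v, suf_m(inf I_u)) = u ∧ suf_m(inf I_v) is a prefix of suf_{2m}(inf I_u)}`.
(The first condition is expressed by exhibiting the genuine length-`m` word
`w = suf_m(inf I_u)` over the alphabet; if `inf I_u` is shorter than `m`, the
padded suffix contains `#` and no state can read it, as `# ∉ Σ`.) -/
def PDFA.Pset {A Q : Type*} (M : PDFA A Q) (g : Q → CStr A) (m : ℕ) (u : Q) : Set Q :=
  {v | (∃ w : List A, w.length = m ∧ (∀ j, j < m → CStr.ofList w j = g u j) ∧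
          M.δStar v w = some u) ∧ ExtPrefix (g v) (g u) m}

section Aux
set_option linter.unusedSectionVars false

variable {A : Type*} [LinearOrder A]

theorem colexLe_refl (f : CStr A) : colexLe f f := Or.inr rfl

theorem colexLt_asymm {f g : CStr A} (h : colexLt f g) : ¬ colexLt g f := by
  rintro ⟨i', he', hl'⟩
  obtain ⟨i, he, hl⟩ := h
  rcases lt_trichotomy i i' with hc | rfl | hc
  · rw [he' i hc] at hl; exact absurd hl (lt_irrefl _)
  · exact absurd (hl.trans hl') (lt_irrefl _)
  · rw [he i' hc] at hl'; exact absurd hl' (lt_irrefl _)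

theorem colexLt_trans {f g h : CStr A} (h1 : colexLt f g) (h2 : colexLt g h) :
    colexLt f h := by
  obtain ⟨i, he, hl⟩ := h1
  obtain ⟨i', he', hl'⟩ := h2
  rcases lt_trichotomy i i' with hc | rfl | hc
  · exact ⟨i, fun j hj => (he j hj).trans (he' j (hj.trans hc)), lt_of_lt_of_eq hl (he' i hc)⟩
  · exact ⟨i, fun j hj => (he j hj).trans (he' j hj), hl.trans hl'⟩
  · exact ⟨i', fun j hj => (he j (hj.trans hc)).trans (he' j hj), lt_of_eq_of_lt (he i' hc) hl'⟩

theorem colexLe_trans {f g h : CStr A} (h1 : colexLe f g) (h2 : colexLe g h) :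
    colexLe f h := by
  rcases h1 with h1 | rfl
  · rcases h2 with h2 | rfl
    · exact Or.inl (colexLt_trans h1 h2)
    · exact Or.inl h1
  · exact h2

theorem colexLe_antisymm {f g : CStr A} (h1 : colexLe f g) (h2 : colexLe g f) : f = g := by
  rcases h1 with h1 | rfl
  · rcases h2 with h2 | rfl
    · exact absurd h2 (colexLt_asymm h1)
    · rfl
  · rfl

theorem colexLe_total (f g : CStr A) : colexLe f g ∨ colexLe g f := by
  classical
  by_cases hfg : f = g
  · exact Or.inl (Or.inr hfg)
  · have hne : ∃ j, f j ≠ g j := by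
      by_contra hc
      push_neg at hc
      exact hfg (funext hc)
    let i := Nat.find hne
    have hi : f i ≠ g i := Nat.find_spec hne
    have hlt : ∀ j, j < i → f j = g j := fun j hj => by
      have := Nat.find_min hne hj
      simpa using this
    rcases lt_or_gt_of_ne hi with h | h
    · exact Or.inl (Or.inl ⟨i, hlt, h⟩)
    · exact Or.inr (Or.inl ⟨i, fun j hj => (hlt j hj).symm, h⟩)

theorem colexLe_snoc {f g : CStr A} (a : A) (h : colexLe f g) :
    colexLe (CStr.snoc f a) (CStr.snoc g a) := by
  rcases h with ⟨i, he, hl⟩ | rfl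
  · refine Or.inl ⟨i + 1, ?_, hl⟩
    intro j hj
    cases j with
    | zero => rfl
    | succ k => exact he k (by omega)
  · exact Or.inr rfl

theorem colexLe_tail {x y : CStr A} (h : colexLe x y) (h0 : x 0 = y 0) :
    colexLe (CStr.drop x 1) (CStr.drop y 1) := by
  rcases h with ⟨i, he, hl⟩ | rfl
  · cases i with
    | zero => rw [h0] at hl; exact absurd hl (lt_irrefl _)
    | succ k =>
      refine Or.inl ⟨k, fun j hj => he (j + 1) (by omega), hl⟩
  · exact Or.inr rfl

theorem drop_snoc (f : CStr A) (a : A) : CStr.drop (CStr.snoc f a) 1 = f := rfl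

theorem not_lt_zero_of_colexLe {x y : CStr A} (h : colexLe x y) : ¬ y 0 < x 0 := by
  rcases h with ⟨i, he, hl⟩ | rfl
  · cases i with
    | zero => exact fun hc => absurd (hl.trans hc) (lt_irrefl _)
    | succ k => rw [he 0 (Nat.succ_pos k)]; exact lt_irrefl _
  · exact lt_irrefl _

theorem snoc_WF {f : CStr A} (hf : f.WF) (a : A) : (CStr.snoc f a).WF := by
  intro i hi
  cases i with
  | zero => exact absurd hi (WithBot.coe_ne_bot)
  | succ k => exact hf k hi

theorem drop_WF {f : CStr A} (hf : f.WF) (k : ℕ) : (CStr.drop f k).WF := by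
  intro i hi
  show f (i + 1 + k) = ⊥
  have := hf (i + k) hi
  rwa [Nat.add_right_comm] at this

theorem ofList_eq (w : List A) (i : ℕ) : CStr.ofList w i = (w.reverse[i]? : Option A) := by
  by_cases h : i < w.length
  · rw [CStr.ofList, dif_pos h, List.getElem?_eq_getElem (by simpa using h)]
    rw [List.get_eq_getElem, List.getElem_reverse]
    rfl
  · rw [CStr.ofList, dif_neg h, List.getElem?_eq_none (by simpa using not_lt.mp h)]
    rfl

theorem ofList_concat (w : List A) (a : A) :
    CStr.ofList (w ++ [a]) = CStr.snoc (CStr.ofList w) a := by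
  funext i
  have hrev : (w ++ [a]).reverse = a :: w.reverse := by simp
  cases i with
  | zero => rw [ofList_eq, hrev, List.getElem?_cons_zero]; rfl
  | succ j =>
    rw [ofList_eq, hrev, List.getElem?_cons_succ, ← ofList_eq]
    rfl

theorem exists_min_rel {α : Type*} (r : α → α → Prop) (hr : ∀ x y, r x y ∨ r y x)
    (ht : ∀ {x y z}, r x y → r y z → r x z) (s : Finset α) :
    s.Nonempty → ∃ v ∈ s, ∀ v' ∈ s, r v v' := by
  classical
  induction s using Finset.induction_on with
  | empty => intro h; simp at h
  | @insert a s ha ih =>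
    intro _
    rcases s.eq_empty_or_nonempty with rfl | hs'
    · refine ⟨a, by simp, ?_⟩
      intro v' hv'
      simp only [Finset.mem_insert, Finset.notMem_empty, or_false] at hv'
      subst hv'
      exact (hr v' v').elim id id
    · obtain ⟨v, hv, hmin⟩ := ih hs'
      rcases hr a v with h1 | h1
      · refine ⟨a, Finset.mem_insert_self _ _, ?_⟩
        intro v' hv'
        rcases Finset.mem_insert.mp hv' with rfl | hv'
        · exact (hr v' v').elim id id
        · exact ht h1 (hmin v' hv')
      · refine ⟨v, Finset.mem_insert_of_mem hv, ?_⟩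
        intro v' hv'
        rcases Finset.mem_insert.mp hv' with rfl | hv'
        · exact h1
        · exact hmin v' hv'

end Aux

section DFA

variable {A Q : Type*}

theorem δStar_append (M : PDFA A Q) (q : Q) (x y : List A) :
    M.δStar q (x ++ y) = (M.δStar q x).bind fun q' => M.δStar q' y := by
  induction x generalizing q with
  | nil => simp [PDFA.δStar]
  | cons a x ih =>
    simp only [List.cons_append, PDFA.δStar]
    cases M.δ q a with
    | none => simp
    | some q' => simp [ih]

theorem step_decomp {M : PDFA A Q} {w' : List A} {b : A} {q u : Q}
    (h : M.δStar q (w' ++ [b]) = some u) :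
    ∃ v, M.δStar q w' = some v ∧ M.δ v b = some u := by
  rw [δStar_append] at h
  rcases Option.bind_eq_some_iff.mp h with ⟨v, hv, hb⟩
  refine ⟨v, hv, ?_⟩
  simp only [PDFA.δStar] at hb
  cases hd : M.δ v b with
  | none => rw [hd] at hb; simp at hb
  | some q' =>
    rw [hd] at hb
    simp only [Option.bind_some, PDFA.δStar] at hb
    exact hb

theorem step_comp {M : PDFA A Q} {w' : List A} {b : A} {q v u : Q}
    (h1 : M.δStar q w' = some v) (h2 : M.δ v b = some u) :
    M.δStar q (w' ++ [b]) = some u := by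
  rw [δStar_append, h1]
  simp [PDFA.δStar, h2]

/-- Any string in `I u`, `u ≠ start`, ends with `lam u` and passes through a predecessor. -/
theorem mem_I_decomp {M : PDFA A Q} {lam : Q → A} (hic : M.InputConsistent lam)
    {u : Q} (hu : u ≠ M.start) {w : List A} (hw : w ∈ M.I u) :
    ∃ v w', w = w' ++ [lam u] ∧ w' ∈ M.I v ∧ M.δ v (lam u) = some u := by
  rcases List.eq_nil_or_concat w with rfl | ⟨w', b, rfl⟩
  · exact absurd (Option.some.inj hw).symm hu
  · rw [List.concat_eq_append] at hw
    obtain ⟨v, hv, hb⟩ := step_decomp hw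
    have hb' : lam u = b := hic v b u hb
    subst hb'
    exact ⟨v, w', List.concat_eq_append, hv, hb⟩

end DFA

/-- For an input-consistent DFA whose initial state has no
incoming transitions and all of whose states are reachable, and a state
`u ≠ s`: `inf I_u = μ · λ(u)` where `μ` is the co-lex minimum of the (finite,
nonempty) set `{inf I_v : v ∈ δ⁻¹(u)}`; symmetrically `sup I_u = ν · λ(u)`
where `ν` is the co-lex maximum of `{sup I_v : v ∈ δ⁻¹(u)}`. -/
theorem infimum_supremum_recursion_on_predecessors
    {A Q : Type*} [LinearOrder A] [Fintype A] [Fintype Q]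
    (M : PDFA A Q) (lam : Q → A) (hic : M.InputConsistent lam)
    (hstart : M.NoIncomingStart) (hreach : M.Reachable)
    (ginf gsup : Q → CStr A)
    (hinf : ∀ w, IsColexGLB (CStr.ofList '' M.I w) (ginf w))
    (hsup : ∀ w, IsColexLUB (CStr.ofList '' M.I w) (gsup w))
    (u : Q) (hu : u ≠ M.start) :
    (∃ v, (∃ a, M.δ v a = some u) ∧
        (∀ v', (∃ a, M.δ v' a = some u) → colexLe (ginf v) (ginf v')) ∧
        ginf u = CStr.snoc (ginf v) (lam u)) ∧
    (∃ v, (∃ a, M.δ v a = some u) ∧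
        (∀ v', (∃ a, M.δ v' a = some u) → colexLe (gsup v') (gsup v)) ∧
        gsup u = CStr.snoc (gsup v) (lam u)) := by
  
  classical
  let S : Finset Q := Finset.univ.filter (fun v => ∃ b, M.δ v b = some u)
  have hmemS : ∀ v, v ∈ S ↔ ∃ b, M.δ v b = some u := by
    intro v; simp [S]
  have hSne : S.Nonempty := by
    obtain ⟨w, hw⟩ := hreach u
    obtain ⟨v, w', -, -, hb⟩ := mem_I_decomp hic hu hw
    exact ⟨v, (hmemS v).mpr ⟨lam u, hb⟩⟩
  obtain ⟨w0, hw0⟩ := hreach u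
  obtain ⟨v0, w0', hw0e, hw0', hb0⟩ := mem_I_decomp hic hu hw0
  have hofw0 : CStr.ofList w0 0 = (lam u : WithBot A) := by
    rw [hw0e, ofList_concat]; rfl
  constructor
  · -- infimum branch
    obtain ⟨v, hvS, hvmin⟩ := exists_min_rel (fun v v' => colexLe (ginf v) (ginf v'))
      (fun x y => colexLe_total _ _) (fun hx hy => colexLe_trans hx hy) S hSne
    obtain ⟨b, hb⟩ := (hmemS v).mp hvS
    have hbl : M.δ v (lam u) = some u := by rw [hic v b u hb]; exact hb
    refine ⟨v, ⟨b, hb⟩, fun v' hv' => hvmin v' ((hmemS v').mpr hv'), ?_⟩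
    have hglb : IsColexGLB (CStr.ofList '' M.I u) (CStr.snoc (ginf v) (lam u)) := by
      refine ⟨snoc_WF (hinf v).1 _, ?_, ?_⟩
      · rintro f ⟨w, hw, rfl⟩
        obtain ⟨v', w', rfl, hw', hb'⟩ := mem_I_decomp hic hu hw
        rw [ofList_concat]
        refine colexLe_snoc _ (colexLe_trans (hvmin v' ((hmemS v').mpr ⟨_, hb'⟩)) ?_)
        exact (hinf v').2.1 _ ⟨w', hw', rfl⟩
      · intro h hWF hlb
        rcases lt_trichotomy (h 0) ((lam u : WithBot A)) with hc | hc | hc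
        · exact Or.inl ⟨0, fun j hj => absurd hj (Nat.not_lt_zero j), hc⟩
        · have hlb' : ∀ f ∈ CStr.ofList '' M.I v, colexLe (CStr.drop h 1) f := by
            rintro f ⟨w', hw', rfl⟩
            have hmem : w' ++ [lam u] ∈ M.I u := step_comp hw' hbl
            have h1 := hlb _ ⟨_, hmem, rfl⟩
            rw [ofList_concat] at h1
            have h2 := colexLe_tail h1 (by rw [hc]; rfl)
            rwa [drop_snoc] at h2
          have hle : colexLe (CStr.drop h 1) (ginf v) :=
            (hinf v).2.2 _ (drop_WF hWF 1) hlb'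
          have h3 := colexLe_snoc (lam u) hle
          have hh : CStr.snoc (CStr.drop h 1) (lam u) = h := by
            funext i
            cases i with
            | zero => exact hc.symm
            | succ j => rfl
          rwa [hh] at h3
        · exact absurd hc (by
            have h1 := not_lt_zero_of_colexLe (hlb _ ⟨_, hw0, rfl⟩)
            rwa [hofw0] at h1)
    exact colexLe_antisymm (hglb.2.2 _ (hinf u).1 (hinf u).2.1)
      ((hinf u).2.2 _ hglb.1 hglb.2.1)
  · -- supremum branch
    obtain ⟨v, hvS, hvmax⟩ := exists_min_rel (fun v v' => colexLe (gsup v') (gsup v))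
      (fun x y => (colexLe_total _ _).symm) (fun hx hy => colexLe_trans hy hx) S hSne
    obtain ⟨b, hb⟩ := (hmemS v).mp hvS
    have hbl : M.δ v (lam u) = some u := by rw [hic v b u hb]; exact hb
    refine ⟨v, ⟨b, hb⟩, fun v' hv' => hvmax v' ((hmemS v').mpr hv'), ?_⟩
    have hlub : IsColexLUB (CStr.ofList '' M.I u) (CStr.snoc (gsup v) (lam u)) := by
      refine ⟨snoc_WF (hsup v).1 _, ?_, ?_⟩
      · rintro f ⟨w, hw, rfl⟩
        obtain ⟨v', w', rfl, hw', hb'⟩ := mem_I_decomp hic hu hw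
        rw [ofList_concat]
        refine colexLe_snoc _ (colexLe_trans ?_ (hvmax v' ((hmemS v').mpr ⟨_, hb'⟩)))
        exact (hsup v').2.1 _ ⟨w', hw', rfl⟩
      · intro h hWF hub
        rcases lt_trichotomy (h 0) ((lam u : WithBot A)) with hc | hc | hc
        · exact absurd hc (by
            have h1 := not_lt_zero_of_colexLe (hub _ ⟨_, hw0, rfl⟩)
            rwa [hofw0] at h1)
        · have hub' : ∀ f ∈ CStr.ofList '' M.I v, colexLe f (CStr.drop h 1) := by
            rintro f ⟨w', hw', rfl⟩
            have hmem : w' ++ [lam u] ∈ M.I u := step_comp hw' hbl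
            have h1 := hub _ ⟨_, hmem, rfl⟩
            rw [ofList_concat] at h1
            have h2 := colexLe_tail h1 (by rw [hc]; rfl)
            rwa [drop_snoc] at h2
          have hle : colexLe (gsup v) (CStr.drop h 1) :=
            (hsup v).2.2 _ (drop_WF hWF 1) hub'
          have h3 := colexLe_snoc (lam u) hle
          have hh : CStr.snoc (CStr.drop h 1) (lam u) = h := by
            funext i
            cases i with
            | zero => exact hc.symm
            | succ j => rfl
          rwa [hh] at h3
        · exact Or.inl ⟨0, fun j hj => absurd hj (Nat.not_lt_zero j), hc⟩
    exact colexLe_antisymm ((hsup u).2.2 _ hlub.1 hlub.2.1)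
      (hlub.2.2 _ (hsup u).1 (hsup u).2.1)
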